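/- For the twisted toroidal Lie algebra T(g) = L(g,σ) ⊕ K with bracket [x⊗a, y⊗b] = [x,y]⊗ab + (x|y)\overline{b da} (central extension of the twisted loop algebra L(g,σ)), and for g = A_{2n-1} with r = 2: the map ψ defined in the paper satisfies [ψ(α_0(k)), ψ(α_j(ℓ))] = r a_{0j} k δ_{k,−ℓ} ψ(c̸) for all j ∈ {1,…,n} and k, ℓ ∈ Z, where ψ(c̸) = \overline{s^{-1}ds}, ψ(α_0(k)) = Σ_{p=0}^{r-1} σ^p(−h'_{θ^0}) ⊗ s^k + \overline{s^k t^{-1} dt}, and ψ(α_j(ℓ)) = (1 − δ_{j,σ(j)}(1 − 1/r)) Σ_{q=0}^{r-1} σ^q(h'_j) ⊗ s^ℓ. -/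

import Mathlib

/-!
STATEMENT 18: For the twisted toroidal Lie algebra T(g) = L(g,σ) ⊕ K with bracket
[x⊗a, y⊗b] = [x,y]⊗ab + (x|y)\overline{b da}, for g = A_{2n-1} = sl_{2n} (n ≥ 3,
realized inside the 2n×2n matrices with (x|y) = tr(xy)) and r = 2: the map ψ of
the paper satisfies [ψ(α_0(k)), ψ(α_j(ℓ))] = r a_{0j} k δ_{k,−ℓ} ψ(c̸) for all
j ∈ {1,…,n} and k, ℓ ∈ ℤ.

Here A = ℂ[s^{±1}, t^{±1}] is the group algebra of ℤ × ℤ (`sm j m` = s^j t^m),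
K' = Ω_A/dA with projection `bar`, the g⊗A-component of the bracket is the Lie
bracket of the base-change Lie algebra A ⊗[ℂ] gl_{2n}, and the K'-component is the
(unique) ℂ-bilinear map κmap with κmap (a⊗x) (b⊗y) = tr(xy) • \overline{b da}
(taken as a hypothesis).  σ is the diagram automorphism x ↦ −J xᵀ J of A_{2n-1},
h'_i = E_{ii} − E_{i+1,i+1} the simple coroots, h'_{θ⁰} = Σ_{i=1}^{2n-2} h'_i, and
  ψ(c̸) = \overline{s^{-1}ds},
  ψ(α_0(k)) = Σ_{p=0}^{1} σ^p(−h'_{θ⁰}) ⊗ s^k + \overline{s^k t^{-1} dt},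
  ψ(α_j(ℓ)) = (1 − δ_{j,σ(j)}(1 − 1/2)) Σ_{q=0}^{1} σ^q(h'_j) ⊗ s^ℓ,
and a_{0j} = −δ_{j,2} (the A_{2n-1}^{(2)} Cartan matrix entry).
-/

open scoped TensorProduct

noncomputable section

abbrev A2 : Type := AddMonoidAlgebra ℂ (ℤ × ℤ)

/-- the monomial `s^j t^m`. -/
def sm (j m : ℤ) : A2 := AddMonoidAlgebra.single (j, m) 1

abbrev Omega2 := KaehlerDifferential ℂ A2

def dA2 : Submodule ℂ Omega2 :=
  LinearMap.range (KaehlerDifferential.D ℂ A2).toLinearMap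

abbrev Kp := Omega2 ⧸ dA2

def bar : Omega2 →ₗ[ℂ] Kp := dA2.mkQ

abbrev gl2n (n : ℕ) := Matrix (Fin (2 * n)) (Fin (2 * n)) ℂ

/-- `E_{ii}` (1-indexed). -/
def eMat (n : ℕ) (i : ℕ) : gl2n n :=
  Matrix.diagonal fun p => if (p : ℕ) + 1 = i then 1 else 0

/-- the simple coroot `h'_i = E_{ii} − E_{i+1,i+1}`. -/
def hco (n : ℕ) (i : ℕ) : gl2n n := eMat n i - eMat n (i + 1)

/-- `h'_{θ⁰} = h'_1 + ⋯ + h'_{2n−2}`, the coroot of θ⁰ = α'_1 + ⋯ + α'_{2n−2}. -/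
def hTheta (n : ℕ) : gl2n n := ∑ i ∈ Finset.Icc 1 (2 * n - 2), hco n i

/-- the diagram automorphism σ of A_{2n−1}: σ(x) = −J xᵀ J with J the
antidiagonal permutation matrix, i.e. (σ x)_{ij} = −x_{rev j, rev i}. -/
def sigmaM (n : ℕ) (x : gl2n n) : gl2n n := fun i j => -x j.rev i.rev

/-- `ψ(c̸) = \overline{s^{-1} ds}` (with zero loop-algebra component). -/
def ψc (n : ℕ) : (A2 ⊗[ℂ] gl2n n) × Kp :=
  (0, bar (sm (-1) 0 • KaehlerDifferential.D ℂ A2 (sm 1 0)))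

/-- `ψ(α_0(k)) = Σ_{p=0}^{1} σ^p(−h'_{θ⁰}) ⊗ s^k + \overline{s^k t^{-1} dt}`. -/
def ψα0 (n : ℕ) (k : ℤ) : (A2 ⊗[ℂ] gl2n n) × Kp :=
  (∑ p ∈ Finset.range 2, sm k 0 ⊗ₜ[ℂ] (sigmaM n)^[p] (-hTheta n),
    bar (sm k (-1) • KaehlerDifferential.D ℂ A2 (sm 0 1)))

/-- `ψ(α_j(ℓ)) = (1 − δ_{j,σ(j)}(1 − 1/r)) Σ_{q=0}^{1} σ^q(h'_j) ⊗ s^ℓ`, r = 2,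
σ(j) = 2n − j. -/
def ψαj (n : ℕ) (j : ℕ) (ℓ : ℤ) : (A2 ⊗[ℂ] gl2n n) × Kp :=
  ((1 - (if (j : ℤ) = 2 * (n : ℤ) - (j : ℤ) then (1 : ℂ) - 1 / 2 else 0)) •
      ∑ q ∈ Finset.range 2, sm ℓ 0 ⊗ₜ[ℂ] (sigmaM n)^[q] (hco n j),
    0)

namespace Stmt18Aux

open Finset

def uD (n a : ℕ) : gl2n n := Matrix.diagonal (fun p => if (p : ℕ) = a then 1 else 0)

lemma tuD {n : ℕ} (a b : ℕ) (ha : a < 2*n) :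
    Matrix.trace (uD n a * uD n b) = if a = b then 1 else 0 := by
  rw [uD, uD, Matrix.diagonal_mul_diagonal, Matrix.trace_diagonal]
  by_cases h : a = b
  · subst h
    rw [if_pos rfl, Finset.sum_eq_single (⟨a, ha⟩ : Fin (2*n))]
    · simp
    · intro p _ hp
      have hpa : (p : ℕ) ≠ a := fun hh => hp (Fin.ext hh)
      simp [hpa]
    · simp
  · rw [if_neg h]
    apply Finset.sum_eq_zero
    intro p _
    by_cases h1 : (p:ℕ) = a
    · have h2 : (p:ℕ) ≠ b := by omega
      simp [h2]
    · simp [h1]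

lemma sigma_diagonal {n : ℕ} (d : Fin (2*n) → ℂ) :
    sigmaM n (Matrix.diagonal d) = Matrix.diagonal (fun p => -d p.rev) := by
  funext i j
  show -(Matrix.diagonal d j.rev i.rev) = _
  by_cases h : i = j
  · subst h
    simp [Matrix.diagonal_apply]
  · have h2 : j.rev ≠ i.rev := fun hh => h (Fin.rev_injective hh).symm
    have h3 : i ≠ j := h
    simp [Matrix.diagonal_apply, h2, h3]

lemma sigma_sub {n : ℕ} (x y : gl2n n) :
    sigmaM n (x - y) = sigmaM n x - sigmaM n y := by
  funext i j
  simp only [sigmaM, Matrix.sub_apply]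
  ring

lemma sigma_uD {n : ℕ} (a : ℕ) (ha : a < 2*n) :
    sigmaM n (uD n a) = -(uD n (2*n-1-a)) := by
  rw [uD, sigma_diagonal, uD, Matrix.diagonal_neg]
  refine congrArg Matrix.diagonal (funext fun p => ?_)
  rw [neg_inj]
  have hval : (p.rev : ℕ) = 2*n - ((p:ℕ)+1) := Fin.val_rev p
  have hlt := p.isLt
  by_cases h : (p:ℕ) = 2*n-1-a
  · rw [if_pos h, if_pos (by omega)]
  · rw [if_neg h, if_neg (by omega)]

lemma eMat_eq {n : ℕ} (i : ℕ) (hi : 1 ≤ i) : eMat n i = uD n (i-1) := by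
  rw [eMat, uD]
  refine congrArg Matrix.diagonal (funext fun p => ?_)
  by_cases h : (p:ℕ)+1 = i
  · rw [if_pos h, if_pos (by omega)]
  · rw [if_neg h, if_neg (by omega)]

lemma hco_eq {n : ℕ} (j : ℕ) (hj : 1 ≤ j) : hco n j = uD n (j-1) - uD n j := by
  rw [hco, eMat_eq j hj, eMat_eq (j+1) (by omega), Nat.add_sub_cancel]

lemma hTheta_eq {n : ℕ} : hTheta n = uD n 0 - uD n (2*n-2) := by
  rw [hTheta]
  rw [Finset.sum_congr rfl (fun i hi => hco_eq i (Finset.mem_Icc.mp hi).1)]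
  rw [← Finset.Ico_add_one_right_eq_Icc, Finset.sum_Ico_eq_sum_range]
  have h1 : Nat.succ (2*n-2) - 1 = 2*n-2 := by omega
  rw [show 2*n-2+1 - 1 = 2*n-2 from h1]
  rw [Finset.sum_congr rfl (fun r _ => by
    rw [show 1 + r - 1 = r from by omega, show 1 + r = r + 1 from by omega])]
  exact Finset.sum_range_sub' (fun r => uD n r) (2*n-2)

lemma neg_hTheta {n : ℕ} : -hTheta n = uD n (2*n-2) - uD n 0 := by
  rw [hTheta_eq, neg_sub]

lemma sigma_neg_hTheta {n : ℕ} (hn : 1 ≤ n) :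
    sigmaM n (-hTheta n) = uD n (2*n-1) - uD n 1 := by
  rw [neg_hTheta, sigma_sub, sigma_uD (2*n-2) (by omega), sigma_uD 0 (by omega),
    neg_sub_neg, show 2*n-1-(2*n-2) = 1 from by omega, show 2*n-1-0 = 2*n-1 from by omega]

lemma sigma_hco {n : ℕ} (j : ℕ) (hj1 : 1 ≤ j) (hj2 : j ≤ n) (hn : 1 ≤ n) :
    sigmaM n (hco n j) = uD n (2*n-1-j) - uD n (2*n-j) := by
  rw [hco_eq j hj1, sigma_sub, sigma_uD (j-1) (by omega), sigma_uD j (by omega),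
    neg_sub_neg, show 2*n-1-(j-1) = 2*n-j from by omega]

lemma trace4 {n : ℕ} (a b c d : ℕ) (ha : a < 2*n) (hb : b < 2*n) :
    Matrix.trace ((uD n a - uD n b) * (uD n c - uD n d)) =
      (if a = c then (1:ℂ) else 0) - (if a = d then 1 else 0)
        - (if b = c then 1 else 0) + (if b = d then 1 else 0) := by
  rw [Matrix.sub_mul, Matrix.mul_sub, Matrix.mul_sub, Matrix.trace_sub, Matrix.trace_sub,
    Matrix.trace_sub, tuD a c ha, tuD a d ha, tuD b c hb, tuD b d hb]
  ring

lemma lie_diag {n : ℕ} (d e : Fin (2*n) → ℂ) :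
    ⁅Matrix.diagonal d, Matrix.diagonal e⁆ = 0 := by
  rw [Ring.lie_def, Matrix.diagonal_mul_diagonal, Matrix.diagonal_mul_diagonal, sub_eq_zero]
  refine congrArg Matrix.diagonal (funext fun i => ?_)
  ring

lemma lie_uD {n : ℕ} (a b c d : ℕ) : ⁅uD n a - uD n b, uD n c - uD n d⁆ = 0 := by
  rw [uD, uD, uD, uD, Matrix.diagonal_sub, Matrix.diagonal_sub, lie_diag]

lemma lie_uD_smul {n : ℕ} (c : ℂ) (a b a' b' : ℕ) :
    ⁅uD n a - uD n b, c • (uD n a' - uD n b')⁆ = 0 := by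
  rw [Ring.lie_def, Matrix.mul_smul, Matrix.smul_mul, ← smul_sub, ← Ring.lie_def, lie_uD,
    smul_zero]

end Stmt18Aux
namespace Stmt18Aux

lemma sm_mul (j m j' m' : ℤ) : sm j m * sm j' m' = sm (j+j') (m+m') := by
  simp [sm, AddMonoidAlgebra.single_mul_single, Prod.mk_add_mk]

lemma sm_one : sm 0 0 = 1 := AddMonoidAlgebra.one_def.symm

lemma Dsm_neg_one :
    (KaehlerDifferential.D ℂ A2) (sm (-1) 0) =
      -(sm (-2) 0 • (KaehlerDifferential.D ℂ A2) (sm 1 0)) := by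
  set D := KaehlerDifferential.D ℂ A2 with hD
  have h : sm 1 0 * sm (-1) 0 = 1 := by
    rw [sm_mul]; norm_num [sm_one]
  have h3 : sm 1 0 • D (sm (-1) 0) + sm (-1) 0 • D (sm 1 0) = 0 := by
    rw [← Derivation.leibniz, h, Derivation.map_one_eq_zero]
  have h4 : sm 1 0 • D (sm (-1) 0) = -(sm (-1) 0 • D (sm 1 0)) :=
    eq_neg_of_add_eq_zero_left h3
  calc D (sm (-1) 0) = (sm (-1) 0 * sm 1 0) • D (sm (-1) 0) := by
        rw [sm_mul]; norm_num [sm_one]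
    _ = sm (-1) 0 • (sm 1 0 • D (sm (-1) 0)) := by rw [mul_smul]
    _ = sm (-1) 0 • (-(sm (-1) 0 • D (sm 1 0))) := by rw [h4]
    _ = -(sm (-2) 0 • D (sm 1 0)) := by
        rw [smul_neg, smul_smul, sm_mul]; norm_num

lemma Dsm (k : ℤ) :
    (KaehlerDifferential.D ℂ A2) (sm k 0) =
      (k:ℂ) • (sm (k-1) 0 • (KaehlerDifferential.D ℂ A2) (sm 1 0)) := by
  set D := KaehlerDifferential.D ℂ A2 with hD
  have key : ∀ (c : ℂ) (a b : A2) (x : Omega2), a • (c • b • x) = c • ((a*b) • x) := by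
    intro c a b x
    rw [smul_comm, smul_smul]
  induction k using Int.induction_on with
  | zero => rw [sm_one]; simp
  | succ i ih =>
      have h1 : sm ((i:ℤ)+1) 0 = sm i 0 * sm 1 0 := by rw [sm_mul]; norm_num
      rw [h1, Derivation.leibniz, ih, key, sm_mul,
        show (1:ℤ) + ((i:ℤ)-1) = (i:ℤ) from by ring,
        show ((0:ℤ)+0 : ℤ) = 0 from by norm_num,
        show ((i:ℤ)+1) - 1 = (i:ℤ) from by ring]
      push_cast
      rw [add_smul, one_smul, add_comm]
  | pred i ih =>
      have h1 : sm (-(i:ℤ)-1) 0 = sm (-(i:ℤ)) 0 * sm (-1) 0 := by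
        rw [sm_mul, show -(i:ℤ) + -1 = -(i:ℤ)-1 from by ring]
        norm_num
      rw [h1, Derivation.leibniz, ih, Dsm_neg_one, smul_neg, smul_smul, sm_mul, key, sm_mul,
        show -(i:ℤ) + -2 = -(i:ℤ)-1-1 from by ring,
        show (-1:ℤ) + (-(i:ℤ)-1) = -(i:ℤ)-1-1 from by ring,
        show ((0:ℤ)+0 : ℤ) = 0 from by norm_num]
      push_cast
      rw [sub_smul, one_smul, neg_add_eq_sub]

lemma bar_D (a : A2) : bar ((KaehlerDifferential.D ℂ A2) a) = 0 := by
  rw [bar, Submodule.mkQ_apply, Submodule.Quotient.mk_eq_zero]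
  exact ⟨a, rfl⟩

lemma bar_key (k ℓ : ℤ) :
    bar (sm ℓ 0 • (KaehlerDifferential.D ℂ A2) (sm k 0)) =
      ((k:ℂ) * (if k = -ℓ then 1 else 0)) •
        bar (sm (-1) 0 • (KaehlerDifferential.D ℂ A2) (sm 1 0)) := by
  set D := KaehlerDifferential.D ℂ A2 with hD
  rw [Dsm k, smul_comm (sm ℓ 0) ((k:ℂ)), smul_smul, sm_mul, map_smul,
    show ((0:ℤ)+0 : ℤ) = 0 from rfl]
  by_cases h : k = -ℓ
  · rw [if_pos h, mul_one, show ℓ + (k-1) = -1 from by omega]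
  · rw [if_neg h, mul_zero, zero_smul]
    have hm : ℓ + (k-1) + 1 ≠ 0 := by omega
    have hc : ((ℓ + (k-1) + 1 : ℤ):ℂ) ≠ 0 := Int.cast_ne_zero.mpr hm
    have h6 : sm (ℓ + (k-1)) 0 • D (sm 1 0) =
        ((ℓ+(k-1)+1 : ℤ):ℂ)⁻¹ • D (sm (ℓ+(k-1)+1) 0) := by
      rw [Dsm (ℓ+(k-1)+1), show (ℓ+(k-1)+1) - 1 = ℓ+(k-1) from by ring,
        smul_smul, inv_mul_cancel₀ hc, one_smul]
    rw [h6, map_smul, bar_D, smul_zero, smul_zero]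

end Stmt18Aux
namespace Stmt18Aux

lemma trace_total {n : ℕ} (j : ℕ) (hn : 3 ≤ n) (hj1 : 1 ≤ j) (hj2 : j ≤ n) :
    Matrix.trace ((-hTheta n) * hco n j)
      + Matrix.trace ((-hTheta n) * sigmaM n (hco n j))
      + Matrix.trace ((sigmaM n (-hTheta n)) * hco n j)
      + Matrix.trace ((sigmaM n (-hTheta n)) * sigmaM n (hco n j))
      = if j = 2 then (-2 : ℂ) else 0 := by
  rw [sigma_neg_hTheta (by omega), sigma_hco j hj1 hj2 (by omega), neg_hTheta, hco_eq j hj1,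
    trace4 _ _ _ _ (by omega) (by omega), trace4 _ _ _ _ (by omega) (by omega),
    trace4 _ _ _ _ (by omega) (by omega), trace4 _ _ _ _ (by omega) (by omega)]
  rcases eq_or_ne j 1 with h1 | hne1
  · subst h1
    rw [show (2*n-1-1 : ℕ) = 2*n-2 from by omega]
    have d1 : 2*n-2 ≠ 0 := by omega
    have d2 : 2*n-2 ≠ 1 := by omega
    have d3 : 2*n-2 ≠ 2*n-1 := by omega
    have d4 : (0:ℕ) ≠ 2*n-2 := by omega
    have d5 : (0:ℕ) ≠ 2*n-1 := by omega
    have d6 : 2*n-1 ≠ 0 := by omega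
    have d7 : 2*n-1 ≠ 1 := by omega
    have d8 : 2*n-1 ≠ 2*n-2 := by omega
    have d9 : (1:ℕ) ≠ 2*n-2 := by omega
    have d10 : (1:ℕ) ≠ 2*n-1 := by omega
    norm_num [d1, d2, d3, d4, d5, d6, d7, d8, d9, d10]
  rcases eq_or_ne j 2 with h2 | hne2
  · subst h2
    rw [show (2*n-1-2 : ℕ) = 2*n-3 from by omega]
    have d1 : 2*n-2 ≠ 1 := by omega
    have d2 : 2*n-2 ≠ 2 := by omega
    have d3 : 2*n-2 ≠ 2*n-3 := by omega
    have d4 : (0:ℕ) ≠ 2*n-3 := by omega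
    have d5 : (0:ℕ) ≠ 2*n-2 := by omega
    have d6 : 2*n-1 ≠ 1 := by omega
    have d7 : 2*n-1 ≠ 2 := by omega
    have d8 : 2*n-1 ≠ 2*n-3 := by omega
    have d9 : 2*n-1 ≠ 2*n-2 := by omega
    have d10 : (1:ℕ) ≠ 2*n-3 := by omega
    have d11 : (1:ℕ) ≠ 2*n-2 := by omega
    norm_num [d1, d2, d3, d4, d5, d6, d7, d8, d9, d10, d11]
  · have hj3 : 3 ≤ j := by omega
    have d1 : 2*n-2 ≠ j-1 := by omega
    have d2 : 2*n-2 ≠ j := by omega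
    have d3 : (0:ℕ) ≠ j-1 := by omega
    have d4 : (0:ℕ) ≠ j := by omega
    have d5 : 2*n-2 ≠ 2*n-1-j := by omega
    have d6 : 2*n-2 ≠ 2*n-j := by omega
    have d7 : (0:ℕ) ≠ 2*n-1-j := by omega
    have d8 : (0:ℕ) ≠ 2*n-j := by omega
    have d9 : 2*n-1 ≠ j-1 := by omega
    have d10 : 2*n-1 ≠ j := by omega
    have d11 : (1:ℕ) ≠ j-1 := by omega
    have d12 : (1:ℕ) ≠ j := by omega
    have d13 : 2*n-1 ≠ 2*n-1-j := by omega
    have d14 : 2*n-1 ≠ 2*n-j := by omega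
    have d15 : (1:ℕ) ≠ 2*n-1-j := by omega
    have d16 : (1:ℕ) ≠ 2*n-j := by omega
    norm_num [d1, d2, d3, d4, d5, d6, d7, d8, d9, d10, d11, d12, d13, d14, d15, d16, hne2]

end Stmt18Aux
open Stmt18Aux in
theorem stmt18 (n : ℕ) (hn : 3 ≤ n)
    (κmap : (A2 ⊗[ℂ] gl2n n) →ₗ[ℂ] (A2 ⊗[ℂ] gl2n n) →ₗ[ℂ] Kp)
    (hκ : ∀ (a b : A2) (x y : gl2n n),
      κmap (a ⊗ₜ x) (b ⊗ₜ y) =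
        Matrix.trace (x * y) • bar (b • KaehlerDifferential.D ℂ A2 a)) :
    ∀ (j : ℕ) (k ℓ : ℤ), 1 ≤ j → j ≤ n →
      ((⁅(ψα0 n k).1, (ψαj n j ℓ).1⁆, κmap (ψα0 n k).1 (ψαj n j ℓ).1) :
          (A2 ⊗[ℂ] gl2n n) × Kp) =
        ((2 : ℂ) * (if j = 2 then -1 else 0) * (k : ℂ) * (if k = -ℓ then 1 else 0)) •
          ψc n := by
  intro j k ℓ hj1 hj2
  set c : ℂ := (1 - (if (j : ℤ) = 2 * (n : ℤ) - (j : ℤ) then (1 : ℂ) - 1 / 2 else 0)) with hc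
  have hψ0 : (ψα0 n k).1 =
      sm k 0 ⊗ₜ[ℂ] (-hTheta n) + sm k 0 ⊗ₜ[ℂ] sigmaM n (-hTheta n) := by
    rw [ψα0]
    simp [Finset.sum_range_succ]
  have hψj : (ψαj n j ℓ).1 =
      sm ℓ 0 ⊗ₜ[ℂ] (c • hco n j) + sm ℓ 0 ⊗ₜ[ℂ] (c • sigmaM n (hco n j)) := by
    rw [ψαj]
    simp only [Finset.sum_range_succ, Finset.sum_range_zero, zero_add, Function.iterate_one,
      Function.iterate_zero, id_eq, smul_add, TensorProduct.tmul_smul, ← hc]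
  rw [hψ0, hψj, ψc, Prod.smul_mk, smul_zero, Prod.mk.injEq]
  constructor
  · -- Lie bracket component
    have eadd : ∀ (X Y Z W : A2 ⊗[ℂ] gl2n n),
        ⁅X + Y, Z + W⁆ = ⁅X, Z⁆ + ⁅Y, Z⁆ + (⁅X, W⁆ + ⁅Y, W⁆) := by
      intro X Y Z W
      simp only [Ring.lie_def, add_mul, mul_add]; abel
    have bt : ∀ (s t : A2) (x y : gl2n n), ⁅s ⊗ₜ[ℂ] x, t ⊗ₜ[ℂ] y⁆ = (s * t) ⊗ₜ[ℂ] ⁅x, y⁆ := by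
      intro s t x y
      rw [Ring.lie_def, Ring.lie_def, Algebra.TensorProduct.tmul_mul_tmul,
        Algebra.TensorProduct.tmul_mul_tmul, mul_comm t s, ← TensorProduct.tmul_sub]
    rw [eadd, bt, bt, bt, bt]
    rw [show ⁅-hTheta n, c • hco n j⁆ = 0 from by
        rw [neg_hTheta, hco_eq j hj1]; exact lie_uD_smul c _ _ _ _]
    rw [show ⁅sigmaM n (-hTheta n), c • hco n j⁆ = 0 from by
        rw [sigma_neg_hTheta (by omega), hco_eq j hj1]; exact lie_uD_smul c _ _ _ _]
    rw [show ⁅-hTheta n, c • sigmaM n (hco n j)⁆ = 0 from by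
        rw [sigma_hco j hj1 hj2 (by omega), neg_hTheta]; exact lie_uD_smul c _ _ _ _]
    rw [show ⁅sigmaM n (-hTheta n), c • sigmaM n (hco n j)⁆ = 0 from by
        rw [sigma_neg_hTheta (by omega), sigma_hco j hj1 hj2 (by omega)]
        exact lie_uD_smul c _ _ _ _]
    simp only [TensorProduct.tmul_zero, add_zero]
  · -- K component
    rw [map_add (κmap _) _ _, map_add κmap _ _, LinearMap.add_apply, LinearMap.add_apply,
      hκ, hκ, hκ, hκ]
    simp only [Matrix.mul_smul, Matrix.trace_smul, smul_eq_mul]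
    rw [bar_key k ℓ]
    have T := trace_total (n := n) j hn hj1 hj2
    by_cases h2 : j = 2
    · subst h2
      have hcc : c = 1 := by
        rw [hc, if_neg (by omega : ¬ ((2:ℕ) : ℤ) = 2 * (n:ℤ) - ((2:ℕ):ℤ)), sub_zero]
      rw [if_pos rfl] at T
      rw [if_pos rfl, hcc]
      match_scalars
      · linear_combination ((k:ℂ) * (if k = -ℓ then (1:ℂ) else 0)) * T
    · have hcc := hc
      rw [if_neg h2] at T
      rw [if_neg h2]
      match_scalars
      · linear_combination (c * (k:ℂ) * (if k = -ℓ then (1:ℂ) else 0)) * T
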